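/- Let α = (1+√33)/4. Suppose Q : ℕ × Fin 2 → ℝ satisfies Q(t+1,0) ≥ Q(t,1) and Q(t+1,1) ≥ 2·Q(t,0) + (1/2)·Q(t,1) for all t, and Q(0,0), Q(0,1), Q(1,0), Q(1,1) are all at least some c > 0. Then there exists a constant c' > 0 such that Q(t,b) ≥ c'·α^t for all t and b ∈ {0,1}. -/
import Mathlib


theorem stmt_1 (Q : ℕ × Fin 2 → ℝ) (c : ℝ) (hc : 0 < c)
    (hrec0 : ∀ t : ℕ, Q (t, 1) ≤ Q (t + 1, 0))
    (hrec1 : ∀ t : ℕ, 2 * Q (t, 0) + (1/2) * Q (t, 1) ≤ Q (t + 1, 1))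
    (h00 : c ≤ Q (0, 0)) (h01 : c ≤ Q (0, 1))
    (h10 : c ≤ Q (1, 0)) (h11 : c ≤ Q (1, 1)) :
    ∃ c' : ℝ, 0 < c' ∧ ∀ (t : ℕ) (b : Fin 2),
      c' * ((1 + Real.sqrt 33) / 4) ^ t ≤ Q (t, b) := by
  set α : ℝ := (1 + Real.sqrt 33) / 4 with hα
  have hs : Real.sqrt 33 ^ 2 = 33 := Real.sq_sqrt (by norm_num)
  have hs5 : (5 : ℝ) < Real.sqrt 33 := by
    nlinarith [Real.sqrt_nonneg 33]
  have hα1 : 1 < α := by rw [hα]; linarith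
  have hα0 : 0 < α := by linarith
  have hαsq : α ^ 2 = α / 2 + 2 := by rw [hα]; nlinarith
  refine ⟨c / α, div_pos hc hα0, ?_⟩
  have key : ∀ t : ℕ, c / α * α ^ t ≤ Q (t, 0) ∧ c / α * α * α ^ t ≤ Q (t, 1) := by
    intro t
    induction t with
    | zero =>
      simp only [pow_zero, mul_one]
      constructor
      · calc c / α ≤ c := by
              rw [div_le_iff₀ hα0]; nlinarith
          _ ≤ Q (0, 0) := h00
      · rw [div_mul_cancel₀ _ (ne_of_gt hα0)]; exact h01
    | succ t ih =>
      obtain ⟨ih0, ih1⟩ := ih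
      constructor
      · calc c / α * α ^ (t + 1) = c / α * α * α ^ t := by ring
          _ ≤ Q (t, 1) := ih1
          _ ≤ Q (t + 1, 0) := hrec0 t
      · have h2 : c / α * α * α ^ (t + 1) = (2 * (c / α * α ^ t) + (1/2) * (c / α * α * α ^ t)) := by
          have h3 : c / α * α * α ^ (t + 1) = (c / α * α ^ t) * α ^ 2 := by ring
          rw [h3, hαsq]; ring
        calc c / α * α * α ^ (t + 1) = 2 * (c / α * α ^ t) + (1/2) * (c / α * α * α ^ t) := h2
          _ ≤ 2 * Q (t, 0) + (1/2) * Q (t, 1) := by linarith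
          _ ≤ Q (t + 1, 1) := hrec1 t
  intro t b
  fin_cases b
  · exact (key t).1
  · show c / α * α ^ t ≤ Q (t, 1)
    have h := (key t).2
    have hpos : 0 ≤ (α - 1) * (c / α * α ^ t) :=
      mul_nonneg (by linarith) (le_of_lt (mul_pos (div_pos hc hα0) (pow_pos hα0 t)))
    nlinarith [hpos]
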